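/- A Banach space E is reflexive if and only if every bounded operator Λ : E* → A, for every Banach space A, admits a dual mapping Γ : A* → E satisfying ψ(Γφ) = φ(Λψ) for all ψ ∈ E*, φ ∈ A*. Moreover this is equivalent to the same condition restricted to finite-dimensional A. -/

import Mathlib

open NormedSpace

/-- A Banach space `E` is reflexive iff every bounded operator `Λ : E* → A`, for every
Banach space `A`, admits a dual mapping `Γ : A* → E` with `ψ(Γφ) = φ(Λψ)`; moreover
this is equivalent to the same condition restricted to finite-dimensional `A`. -/
theorem reflexive_iff_every_operator_admits_dual_mapping
    (E : Type) [NormedAddCommGroup E] [NormedSpace ℂ E] [CompleteSpace E] :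
    (Function.Surjective (NormedSpace.inclusionInDoubleDual ℂ E) ↔
      ∀ (A : Type) (_ : NormedAddCommGroup A), ∀ (_ : @NormedSpace ℂ A _ _)
        (_ : CompleteSpace A), ∀ Λ : StrongDual ℂ E →L[ℂ] A,
        ∃ Γ : StrongDual ℂ A →L[ℂ] E, ∀ (ψ : StrongDual ℂ E) (φ : StrongDual ℂ A), ψ (Γ φ) = φ (Λ ψ)) ∧
    (Function.Surjective (NormedSpace.inclusionInDoubleDual ℂ E) ↔
      ∀ (A : Type) (_ : NormedAddCommGroup A), ∀ (_ : @NormedSpace ℂ A _ _)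
        (_ : FiniteDimensional ℂ A), ∀ Λ : StrongDual ℂ E →L[ℂ] A,
        ∃ Γ : StrongDual ℂ A →L[ℂ] E, ∀ (ψ : StrongDual ℂ E) (φ : StrongDual ℂ A), ψ (Γ φ) = φ (Λ ψ)) := by
  have hPQ : Function.Surjective (NormedSpace.inclusionInDoubleDual ℂ E) →
      ∀ (A : Type) (_ : NormedAddCommGroup A), ∀ (_ : @NormedSpace ℂ A _ _)
        (_ : CompleteSpace A), ∀ Λ : StrongDual ℂ E →L[ℂ] A,
        ∃ Γ : StrongDual ℂ A →L[ℂ] E, ∀ (ψ : StrongDual ℂ E) (φ : StrongDual ℂ A), ψ (Γ φ) = φ (Λ ψ) := by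
    intro hsurj A _ _ _ Λ
    let e : E ≃ₗᵢ[ℂ] StrongDual ℂ (StrongDual ℂ E) :=
      LinearIsometryEquiv.ofSurjective (NormedSpace.inclusionInDoubleDualLi ℂ) hsurj
    refine ⟨(e.symm.toContinuousLinearEquiv : StrongDual ℂ (StrongDual ℂ E) →L[ℂ] E).comp
      ((ContinuousLinearMap.compL ℂ (StrongDual ℂ E) A ℂ).flip Λ), ?_⟩
    intro ψ φ
    have key : ∀ x : StrongDual ℂ (StrongDual ℂ E), ψ (e.symm x) = x ψ := by
      intro x
      have he : ∀ y : E, e y = NormedSpace.inclusionInDoubleDual ℂ E y := fun y => congrFun (LinearIsometryEquiv.coe_ofSurjective (NormedSpace.inclusionInDoubleDualLi ℂ (E := E)) hsurj) y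
      have : NormedSpace.inclusionInDoubleDual ℂ E (e.symm x) = x := by
        rw [← he]; exact e.apply_symm_apply x
      calc ψ (e.symm x) = NormedSpace.inclusionInDoubleDual ℂ E (e.symm x) ψ := by
            rw [NormedSpace.dual_def]
        _ = x ψ := by rw [this]
    exact key (φ.comp Λ)
  have hRP : (∀ (A : Type) (_ : NormedAddCommGroup A), ∀ (_ : @NormedSpace ℂ A _ _)
        (_ : FiniteDimensional ℂ A), ∀ Λ : StrongDual ℂ E →L[ℂ] A,
        ∃ Γ : StrongDual ℂ A →L[ℂ] E, ∀ (ψ : StrongDual ℂ E) (φ : StrongDual ℂ A), ψ (Γ φ) = φ (Λ ψ)) →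
      Function.Surjective (NormedSpace.inclusionInDoubleDual ℂ E) := by
    intro h x
    obtain ⟨Γ, hΓ⟩ := h ℂ inferInstance inferInstance (Module.Finite.self ℂ) x
    refine ⟨Γ (ContinuousLinearMap.id ℂ ℂ), ?_⟩
    ext ψ
    simpa [NormedSpace.dual_def] using hΓ ψ (ContinuousLinearMap.id ℂ ℂ)
  have hQR : (∀ (A : Type) (_ : NormedAddCommGroup A), ∀ (_ : @NormedSpace ℂ A _ _)
        (_ : CompleteSpace A), ∀ Λ : StrongDual ℂ E →L[ℂ] A,
        ∃ Γ : StrongDual ℂ A →L[ℂ] E, ∀ (ψ : StrongDual ℂ E) (φ : StrongDual ℂ A), ψ (Γ φ) = φ (Λ ψ)) →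
      ∀ (A : Type) (_ : NormedAddCommGroup A), ∀ (_ : @NormedSpace ℂ A _ _)
        (_ : FiniteDimensional ℂ A), ∀ Λ : StrongDual ℂ E →L[ℂ] A,
        ∃ Γ : StrongDual ℂ A →L[ℂ] E, ∀ (ψ : StrongDual ℂ E) (φ : StrongDual ℂ A), ψ (Γ φ) = φ (Λ ψ) := by
    intro h A _ _ _ Λ
    exact h A _ _ (FiniteDimensional.complete ℂ A) Λ
  exact ⟨⟨hPQ, fun hQ => hRP (hQR hQ)⟩, ⟨fun hP => hQR (hPQ hP), hRP⟩⟩
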